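/- arXiv:1008.1661 — 5 statements merged into one kernel-verified Lean document; each statement's English description precedes it below -/
import Mathlib

section
/- Suffix-free NFAs are non-returning: let M be an NFA with single start state s accepting a language L, and assume every state of M is useful, i.e., appears on some accepting path. If L is suffix-free, then no transition of M enters s (that is, s ∉ δ(q,a) for every state q and every letter a). -/
open Computability

/-- A nondeterministic finite automaton with a single start state and
no ε-transitions. -/
structure SNFA (α : Type) (σ : Type) where
  step : σ → α → Set σ
  start : σ
  accept : Set σ

namespace SNFA

variable {α σ : Type}

/-- The set of states reachable from some state in `S` by one transition on `a`. -/
def stepSet (M : SNFA α σ) (S : Set σ) (a : α) : Set σ :=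
  ⋃ s ∈ S, M.step s a

/-- The set of states reachable from the set `S` of states by reading the word `w`. -/
def evalFrom (M : SNFA α σ) (S : Set σ) (w : List α) : Set σ :=
  w.foldl M.stepSet S

/-- The language accepted by `M`: all words spelled out by a path
from the start state to an accepting state. -/
def accepts (M : SNFA α σ) : Language α :=
  {w | ∃ q ∈ M.accept, q ∈ M.evalFrom {M.start} w}

end SNFA

/-- A language is suffix-free if no word of the language is a proper suffix
of another word of the language. -/
def SuffixFree {α : Type} (L : Language α) : Prop :=
  ∀ u v : List α, u ∈ L → v ∈ L → u <:+ v → u = v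

/-- `NSCle L k`: there is an NFA with at most `k` states accepting `L`
(so the nondeterministic state complexity of `L` is at most `k`). -/
def NSCle {α : Type} (L : Language α) (k : ℕ) : Prop :=
  ∃ (σ : Type) (x : Fintype σ) (M : SNFA α σ), M.accepts = L ∧ @Fintype.card σ x ≤ k

/-- `NSCge L k`: every NFA accepting `L` has at least `k` states
(so the nondeterministic state complexity of `L` is at least `k`). -/
def NSCge {α : Type} (L : Language α) (k : ℕ) : Prop :=
  ∀ (σ : Type) [Fintype σ] (M : SNFA α σ), M.accepts = L → k ≤ Fintype.card σ

/-- `NSCeq L m`: the nondeterministic state complexity of `L` is exactly `m`: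
some NFA with `m` states accepts `L` and every NFA accepting `L` has at least
`m` states. -/
def NSCeq {α : Type} (L : Language α) (m : ℕ) : Prop :=
  NSCle L m ∧ NSCge L m

lemma SNFA.evalFrom_append {α σ : Type} (M : SNFA α σ) (S : Set σ) (u v : List α) :
    M.evalFrom S (u ++ v) = M.evalFrom (M.evalFrom S u) v :=
  List.foldl_append ..

lemma SNFA.evalFrom_mono {α σ : Type} (M : SNFA α σ) {S T : Set σ} (h : S ⊆ T)
    (w : List α) : M.evalFrom S w ⊆ M.evalFrom T w := by
  induction w generalizing S T with
  | nil => exact h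
  | cons a w ih =>
    apply ih
    intro x hx
    simp only [SNFA.stepSet, Set.mem_iUnion] at hx ⊢
    obtain ⟨s, hs, hx⟩ := hx
    exact ⟨s, h hs, hx⟩

/-- **Suffix-free NFAs are non-returning.** If every state of the NFA `M` is
useful (lies on some accepting path) and the language accepted by `M` is
suffix-free, then no transition of `M` enters the start state. -/
theorem suffixFree_nonreturning {α σ : Type} [Fintype σ] (M : SNFA α σ)
    (huseful : ∀ q : σ, ∃ u w : List α,
      q ∈ M.evalFrom {M.start} u ∧ ∃ f ∈ M.accept, f ∈ M.evalFrom {q} w)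
    (hsf : SuffixFree M.accepts) :
    ∀ (q : σ) (a : α), M.start ∉ M.step q a := by
  intro q a hstep
  obtain ⟨u, w, hqu, f, hf, hfw⟩ := huseful q
  -- start itself is useful: get an accepted word w0
  obtain ⟨u0, w0, _, f0, hf0, hf0w⟩ := huseful M.start
  have hw0 : w0 ∈ M.accepts := ⟨f0, hf0, hf0w⟩
  -- start ∈ evalFrom {start} (u ++ [a])
  have hstart : M.start ∈ M.evalFrom {M.start} (u ++ [a]) := by
    rw [SNFA.evalFrom_append]
    simp only [SNFA.evalFrom, List.foldl_cons, List.foldl_nil]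
    simp only [SNFA.stepSet, Set.mem_iUnion]
    exact ⟨q, hqu, hstep⟩
  have hbig : (u ++ [a]) ++ w0 ∈ M.accepts := by
    refine ⟨f0, hf0, ?_⟩
    rw [SNFA.evalFrom_append]
    exact M.evalFrom_mono (Set.singleton_subset_iff.mpr hstart) w0 hf0w
  have := hsf w0 ((u ++ [a]) ++ w0) hw0 hbig ⟨u ++ [a], rfl⟩
  have : u ++ [a] = [] := by
    have h := congrArg List.length this
    simp at h
    omega
  simp at this
end

section
/- Let n ≥ 2 and let L₁ = { b a^{k(n-1)} : k ≥ 0 } over the alphabet {a,b} (i.e., the language of the regular expression b(a^{n-1})*). Then L₁ is suffix-free and NSC(L₁) = n, i.e., there is an NFA with n states accepting L₁ and every NFA accepting L₁ has at least n states. -/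
open Computability

namespace NSCAux

open SNFA
open Fin.NatCast

variable {α σ : Type}

theorem stepSet_empty (M : SNFA α σ) (a : α) : M.stepSet ∅ a = ∅ := by
  simp [SNFA.stepSet]

theorem evalFrom_nil (M : SNFA α σ) (S : Set σ) : M.evalFrom S [] = S := rfl

theorem evalFrom_cons (M : SNFA α σ) (S : Set σ) (a : α) (w : List α) :
    M.evalFrom S (a :: w) = M.evalFrom (M.stepSet S a) w := rfl

theorem evalFrom_empty (M : SNFA α σ) (w : List α) : M.evalFrom ∅ w = ∅ := by
  induction w with
  | nil => rfl
  | cons a w ih => rw [evalFrom_cons, stepSet_empty, ih]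

theorem evalFrom_append (M : SNFA α σ) (S : Set σ) (u v : List α) :
    M.evalFrom S (u ++ v) = M.evalFrom (M.evalFrom S u) v :=
  List.foldl_append

theorem stepSet_singleton (M : SNFA α σ) (s : σ) (a : α) :
    M.stepSet {s} a = M.step s a := by
  simp [SNFA.stepSet]

theorem mem_evalFrom (M : SNFA α σ) (S : Set σ) (w : List α) (q : σ) :
    q ∈ M.evalFrom S w ↔ ∃ s ∈ S, q ∈ M.evalFrom {s} w := by
  induction w generalizing S with
  | nil => simp [evalFrom_nil]
  | cons a w ih =>
    rw [evalFrom_cons, ih]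
    constructor
    · rintro ⟨p, hp, hq⟩
      rcases Set.mem_iUnion₂.1 hp with ⟨s, hs, hps⟩
      refine ⟨s, hs, ?_⟩
      rw [evalFrom_cons, stepSet_singleton, ih]
      exact ⟨p, hps, hq⟩
    · rintro ⟨s, hs, hq⟩
      rw [evalFrom_cons, stepSet_singleton, ih] at hq
      rcases hq with ⟨p, hps, hq⟩
      exact ⟨p, Set.mem_iUnion₂.2 ⟨s, hs, hps⟩, hq⟩

theorem fin2_cases (a : Fin 2) : a = 0 ∨ a = 1 := by
  fin_cases a
  · exact Or.inl rfl
  · exact Or.inr rfl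

/-- The witness machine for `b (a^m)^*`, with `m + 1` states. -/
def M (m : ℕ) [NeZero m] : SNFA (Fin 2) (Option (Fin m)) where
  step q a :=
    match q with
    | none => if a = 1 then {some 0} else ∅
    | some i => if a = 0 then {some (i + 1)} else ∅
  start := none
  accept := {some 0}

variable (m : ℕ) [NeZero m]

theorem M_eval_zeros (c : ℕ) (i : Fin m) :
    (M m).evalFrom {some i} (List.replicate c 0) = {some (i + (c : Fin m))} := by
  induction c generalizing i with
  | zero => simp [evalFrom_nil]
  | succ c ih =>
    rw [List.replicate_succ, evalFrom_cons, stepSet_singleton]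
    have hstep : (M m).step (some i) 0 = {some (i + 1)} := by simp [M]
    rw [hstep, ih]
    congr 2
    push_cast
    abel

theorem M_eval_allzeros (w : List (Fin 2)) (i : Fin m) (q : Option (Fin m))
    (hq : q ∈ (M m).evalFrom {some i} w) : w = List.replicate w.length 0 := by
  induction w generalizing i with
  | nil => rfl
  | cons a w ih =>
    rw [evalFrom_cons, stepSet_singleton] at hq
    rcases fin2_cases a with rfl | rfl
    · have hstep : (M m).step (some i) 0 = {some (i + 1)} := by simp [M]
      rw [hstep] at hq
      rw [List.length_cons, List.replicate_succ]
      rw [ih (i + 1) hq]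
      simp
    · have hstep : (M m).step (some i) 1 = ∅ := by simp [M]
      rw [hstep, evalFrom_empty] at hq
      exact absurd hq (Set.notMem_empty q)

theorem M_accepts :
    (M m).accepts = {w : List (Fin 2) | ∃ k : ℕ, w = 1 :: List.replicate (k * m) 0} := by
  ext w
  constructor
  · rintro ⟨q, hacc, hev⟩
    have hq : q = some 0 := hacc
    subst hq
    match w with
    | [] =>
      rw [evalFrom_nil] at hev
      simp only [Set.mem_singleton_iff] at hev
      exact absurd hev (Option.some_ne_none _)
    | a :: t =>
      rw [evalFrom_cons, stepSet_singleton] at hev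
      replace hev : some 0 ∈ (M m).evalFrom ((M m).step none a) t := hev
      rcases fin2_cases a with rfl | rfl
      · have hstep : (M m).step none 0 = ∅ := by simp [M]
        rw [hstep, evalFrom_empty] at hev
        exact absurd hev (Set.notMem_empty _)
      · have hstep : (M m).step none 1 = {some 0} := by simp [M]
        rw [hstep] at hev
        have ht : t = List.replicate t.length 0 := M_eval_allzeros m t 0 _ hev
        rw [ht, M_eval_zeros] at hev
        have h' := Option.some.inj (Set.mem_singleton_iff.mp hev)
        rw [zero_add] at h'
        have hdvd : m ∣ t.length := by
          rw [← Fin.natCast_eq_zero]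
          exact h'.symm
        obtain ⟨k, hk⟩ := hdvd
        exact ⟨k, by rw [ht, hk, mul_comm]⟩
  · rintro ⟨k, rfl⟩
    refine ⟨some 0, rfl, ?_⟩
    show some 0 ∈ (M m).evalFrom {none} (1 :: List.replicate (k * m) 0)
    rw [evalFrom_cons, stepSet_singleton]
    have hstep : (M m).step none 1 = {some 0} := by simp [M]
    rw [hstep, M_eval_zeros]
    simp
    exact (Fin.natCast_eq_zero.mpr (dvd_mul_left m k)).symm

/-- Fooling-set prefixes. -/
def xw (i : ℕ) : List (Fin 2) := if i = 0 then [] else 1 :: List.replicate (i - 1) 0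

/-- Fooling-set suffixes. -/
def yw (m i : ℕ) : List (Fin 2) :=
  if i = 0 then 1 :: List.replicate m 0 else List.replicate (m - (i - 1)) 0

theorem fool_mem (i : ℕ) (hi : i ≤ m) :
    xw i ++ yw m i ∈ {w : List (Fin 2) | ∃ k : ℕ, w = 1 :: List.replicate (k * m) 0} := by
  have hm : 0 < m := Nat.pos_of_ne_zero (NeZero.ne m)
  match i with
  | 0 =>
    exact ⟨1, by simp [xw, yw]⟩
  | s + 1 =>
    refine ⟨1, ?_⟩
    simp only [xw, yw, Nat.succ_ne_zero, if_false, Nat.add_sub_cancel, one_mul]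
    rw [List.cons_append, ← List.replicate_add]
    congr 2
    omega

theorem fool_not_mem (i j : ℕ) (hi : i ≤ m) (hj : j ≤ m) (hij : i ≠ j) :
    xw i ++ yw m j ∉ {w : List (Fin 2) | ∃ k : ℕ, w = 1 :: List.replicate (k * m) 0} := by
  have hm : 0 < m := Nat.pos_of_ne_zero (NeZero.ne m)
  rintro ⟨k, hk⟩
  match i, j with
  | 0, 0 => exact hij rfl
  | 0, t + 1 =>
    simp only [xw, yw, Nat.succ_ne_zero, if_true, if_false, List.nil_append,
      Nat.add_sub_cancel] at hk
    rw [show m - t = (m - t - 1) + 1 by omega, List.replicate_succ] at hk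
    exact absurd (List.cons.inj hk).1 (by decide)
  | s + 1, 0 =>
    simp only [xw, yw, Nat.succ_ne_zero, if_true, if_false, Nat.add_sub_cancel,
      List.cons_append] at hk
    have h1 : (1 : Fin 2) ∈ List.replicate (k * m) (0 : Fin 2) := by
      rw [← (List.cons.inj hk).2]
      simp
    exact absurd (List.eq_of_mem_replicate h1) (by decide)
  | s + 1, t + 1 =>
    simp only [xw, yw, Nat.succ_ne_zero, if_false, Nat.add_sub_cancel,
      List.cons_append] at hk
    rw [← List.replicate_add] at hk
    have hlen : s + (m - t) = k * m := by
      have := congrArg List.length hk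
      simpa using this
    have hst : s ≠ t := by omega
    have hs : s ≤ m - 1 := by omega
    have ht : t ≤ m - 1 := by omega
    have hpos : 0 < s + (m - t) := by omega
    have hlt : s + (m - t) < 2 * m := by omega
    have hk2 : k < 2 := by
      by_contra h
      push_neg at h
      have : 2 * m ≤ k * m := Nat.mul_le_mul_right m h
      omega
    interval_cases k <;> omega

end NSCAux


/-- For `n ≥ 2`, the language `L₁ = b(a^{n-1})*` (over the alphabet `{a, b}`,
encoded as `a = 0`, `b = 1` in `Fin 2`) is suffix-free and its nondeterministic
state complexity is exactly `n`. -/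
theorem nsc_b_a_pow (n : ℕ) (hn : 2 ≤ n) :
    SuffixFree {w : List (Fin 2) | ∃ k : ℕ, w = 1 :: List.replicate (k * (n - 1)) 0} ∧
    NSCeq {w : List (Fin 2) | ∃ k : ℕ, w = 1 :: List.replicate (k * (n - 1)) 0} n := by
  classical
  set m := n - 1 with hm
  haveI : NeZero m := ⟨by omega⟩
  set L : Language (Fin 2) :=
    {w : List (Fin 2) | ∃ k : ℕ, w = 1 :: List.replicate (k * (n - 1)) 0} with hL
  have hLm : L = {w : List (Fin 2) | ∃ k : ℕ, w = 1 :: List.replicate (k * m) 0} := rfl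
  refine ⟨?_, ?_, ?_⟩
  · -- suffix-free
    rintro u v ⟨k, hu⟩ ⟨l, hv⟩ ⟨t, ht⟩
    match t with
    | [] => exact ht
    | a :: t' =>
      exfalso
      rw [hv, List.cons_append] at ht
      have htail : t' ++ u = List.replicate (l * (n - 1)) 0 := (List.cons.inj ht).2
      have h1 : (1 : Fin 2) ∈ List.replicate (l * (n - 1)) (0 : Fin 2) := by
        rw [← htail]
        refine List.mem_append_right _ ?_
        rw [hu]; simp
      exact absurd (List.eq_of_mem_replicate h1) (by decide)
  · -- upper bound
    refine ⟨Option (Fin m), inferInstance, NSCAux.M m, ?_, ?_⟩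
    · rw [NSCAux.M_accepts m, hLm]
    · simp only [Fintype.card_option, Fintype.card_fin]
      omega
  · -- lower bound
    intro σ _ M hM
    have hex : ∀ i : Fin n, ∃ q : σ,
        q ∈ M.evalFrom {M.start} (NSCAux.xw i.val) ∧
        ∃ qf ∈ M.accept, qf ∈ M.evalFrom {q} (NSCAux.yw m i.val) := by
      intro i
      have hi : (i : ℕ) ≤ m := by omega
      have hmem : NSCAux.xw i.val ++ NSCAux.yw m i.val ∈ M.accepts := by
        rw [hM, hLm]
        exact NSCAux.fool_mem m i.val hi
      obtain ⟨qf, hqf, hev⟩ := hmem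
      rw [NSCAux.evalFrom_append, NSCAux.mem_evalFrom] at hev
      obtain ⟨q, hq, hqev⟩ := hev
      exact ⟨q, hq, qf, hqf, hqev⟩
    choose f hf1 hf2 using hex
    have hinj : Function.Injective f := by
      intro i j hfij
      by_contra hij
      obtain ⟨qf, hqf, hqev⟩ := hf2 j
      have : NSCAux.xw i.val ++ NSCAux.yw m j.val ∈ M.accepts := by
        refine ⟨qf, hqf, ?_⟩
        rw [NSCAux.evalFrom_append, NSCAux.mem_evalFrom]
        exact ⟨f i, hf1 i, by rw [hfij]; exact hqev⟩
      rw [hM, hLm] at this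
      exact NSCAux.fool_not_mem m i.val j.val (by omega) (by omega)
        (fun h => hij (Fin.ext h)) this
    calc n = Fintype.card (Fin n) := (Fintype.card_fin n).symm
    _ ≤ Fintype.card σ := Fintype.card_le_of_injective f hinj
end

section
/- Let n ≥ 3 and let L₂ = { b a^{k(n-2)} b : k ≥ 0 } over the alphabet {a,b} (i.e., the language of the regular expression b(a^{n-2})*b). Then L₂ is suffix-free and NSC(L₂) = n, i.e., there is an NFA with n states accepting L₂ and every NFA accepting L₂ has at least n states. -/
open Computability

/-! ### Auxiliary lemmas about `SNFA` -/

namespace SNFA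

variable {α σ : Type} (M : SNFA α σ)

theorem evalFrom_nil (S : Set σ) : M.evalFrom S [] = S := rfl

theorem evalFrom_cons (S : Set σ) (a : α) (w : List α) :
    M.evalFrom S (a :: w) = M.evalFrom (M.stepSet S a) w := rfl

theorem evalFrom_append_s3 (S : Set σ) (x y : List α) :
    M.evalFrom S (x ++ y) = M.evalFrom (M.evalFrom S x) y := by
  simp [evalFrom, List.foldl_append]

theorem stepSet_empty (a : α) : M.stepSet ∅ a = ∅ := by simp [stepSet]

theorem evalFrom_empty (w : List α) : M.evalFrom ∅ w = ∅ := by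
  induction w with
  | nil => rfl
  | cons a w ih => rw [evalFrom_cons, stepSet_empty, ih]

theorem stepSet_singleton (s : σ) (a : α) : M.stepSet {s} a = M.step s a := by
  simp [stepSet]

theorem stepSet_mono {S T : Set σ} (h : S ⊆ T) (a : α) :
    M.stepSet S a ⊆ M.stepSet T a :=
  Set.biUnion_subset_biUnion_left h

theorem evalFrom_mono_s3 {S T : Set σ} (h : S ⊆ T) (w : List α) :
    M.evalFrom S w ⊆ M.evalFrom T w := by
  induction w generalizing S T with
  | nil => exact h
  | cons a w ih => exact ih (M.stepSet_mono h a)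

theorem evalFrom_biUnion (S : Set σ) (w : List α) :
    M.evalFrom S w = ⋃ s ∈ S, M.evalFrom {s} w := by
  induction w generalizing S with
  | nil => exact (Set.biUnion_of_singleton S).symm
  | cons a w ih =>
    rw [evalFrom_cons, ih]
    ext q
    simp only [stepSet, Set.mem_iUnion]
    constructor
    · rintro ⟨p, ⟨s, hs, hp⟩, hq⟩
      refine ⟨s, hs, ?_⟩
      rw [evalFrom_cons, ih, stepSet_singleton]
      simp only [Set.mem_iUnion]
      exact ⟨p, hp, hq⟩
    · rintro ⟨s, hs, hq⟩
      rw [evalFrom_cons, ih, stepSet_singleton] at hq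
      simp only [Set.mem_iUnion] at hq
      obtain ⟨p, hp, hq⟩ := hq
      exact ⟨p, ⟨s, hs, hp⟩, hq⟩

theorem mem_accepts_of_split {x y : List α} {p q : σ}
    (hp : p ∈ M.evalFrom {M.start} x) (hq : q ∈ M.accept)
    (h : q ∈ M.evalFrom {p} y) : x ++ y ∈ M.accepts := by
  refine ⟨q, hq, ?_⟩
  rw [evalFrom_append_s3]
  exact M.evalFrom_mono_s3 (Set.singleton_subset_iff.mpr hp) y h

theorem exists_split_of_mem_accepts {x y : List α}
    (h : x ++ y ∈ M.accepts) :
    ∃ p ∈ M.evalFrom {M.start} x, ∃ q ∈ M.accept, q ∈ M.evalFrom {p} y := by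
  obtain ⟨q, hq, hmem⟩ := h
  rw [evalFrom_append_s3, evalFrom_biUnion] at hmem
  simp only [Set.mem_iUnion] at hmem
  obtain ⟨p, hp, hmem⟩ := hmem
  exact ⟨p, hp, q, hq, hmem⟩

end SNFA

/-! ### The language `b (a^m)* b` -/

/-- The language `{ b a^{km} b : k ≥ 0 }` over `Fin 2` with `a = 0`, `b = 1`. -/
def Lbab (m : ℕ) : Language (Fin 2) :=
  {w : List (Fin 2) | ∃ k : ℕ, w = 1 :: (List.replicate (k * m) 0 ++ [1])}

theorem mem_Lbab_iff (m c : ℕ) (hm : 0 < m) :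
    ((1 : Fin 2) :: (List.replicate c (0 : Fin 2) ++ [1]) ∈ Lbab m) ↔ m ∣ c := by
  constructor
  · rintro ⟨k, hk⟩
    have hlen := congrArg List.length hk
    simp at hlen
    have hc : c = k * m := by omega
    exact ⟨k, by rw [hc, Nat.mul_comm]⟩
  · rintro ⟨k, rfl⟩
    exact ⟨k, by rw [Nat.mul_comm]⟩

theorem count_one_of_mem_Lbab {m : ℕ} {w : List (Fin 2)} (h : w ∈ Lbab m) :
    w.count 1 = 2 := by
  obtain ⟨k, rfl⟩ := h
  simp [List.count_cons, List.count_append, List.count_replicate]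

/-! ### The `n`-state NFA for `Lbab m`, `n = m + 2` -/

/-- The NFA for `b (a^m)* b`: a start state, a cycle `ZMod m`, and an accept state. -/
def Mbab (m : ℕ) : SNFA (Fin 2) (Unit ⊕ ZMod m ⊕ Unit) where
  step q a :=
    match q with
    | Sum.inl _ => if a = 1 then {Sum.inr (Sum.inl 0)} else ∅
    | Sum.inr (Sum.inl i) =>
        if a = 0 then {Sum.inr (Sum.inl (i + 1))}
        else if i = 0 then {Sum.inr (Sum.inr ())} else ∅
    | Sum.inr (Sum.inr _) => ∅
  start := Sum.inl ()
  accept := {Sum.inr (Sum.inr ())}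

theorem fin_two_cases : ∀ a : Fin 2, a = 0 ∨ a = 1 := by decide

theorem Mbab_eval_replicate (m : ℕ) (j : ℕ) (i : ZMod m) :
    (Mbab m).evalFrom {Sum.inr (Sum.inl i)} (List.replicate j (0 : Fin 2))
      = {Sum.inr (Sum.inl (i + j))} := by
  induction j generalizing i with
  | zero => simp [SNFA.evalFrom_nil]
  | succ j ih =>
    rw [List.replicate_succ, SNFA.evalFrom_cons, SNFA.stepSet_singleton]
    show (Mbab m).evalFrom {Sum.inr (Sum.inl (i + 1))} _ = _
    rw [ih]
    congr 2
    push_cast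
    ring_nf

theorem Mbab_accept_reach (m : ℕ) (w : List (Fin 2)) (i : ZMod m)
    (h : Sum.inr (Sum.inr ()) ∈ (Mbab m).evalFrom {Sum.inr (Sum.inl i)} w) :
    ∃ j : ℕ, w = List.replicate j (0 : Fin 2) ++ [1] ∧ i + (j : ZMod m) = 0 := by
  induction w generalizing i with
  | nil => simp [SNFA.evalFrom_nil] at h
  | cons a w ih =>
    rw [SNFA.evalFrom_cons, SNFA.stepSet_singleton] at h
    rcases fin_two_cases a with rfl | rfl
    · -- a = 0
      have h' : Sum.inr (Sum.inr ()) ∈ (Mbab m).evalFrom {Sum.inr (Sum.inl (i + 1))} w := h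
      obtain ⟨j, rfl, hj⟩ := ih (i + 1) h'
      refine ⟨j + 1, by simp [List.replicate_succ], ?_⟩
      push_cast
      rw [← hj]; ring
    · -- a = 1
      by_cases hi : i = 0
      · subst hi
        have h' : Sum.inr (Sum.inr ()) ∈
            (Mbab m).evalFrom {Sum.inr (Sum.inr ())} w := by
          simpa [Mbab] using h
        cases w with
        | nil => exact ⟨0, by simp, by simp⟩
        | cons b w =>
          rw [SNFA.evalFrom_cons, SNFA.stepSet_singleton] at h'
          have : (Mbab m).step (Sum.inr (Sum.inr ())) b = ∅ := rfl
          rw [this, SNFA.evalFrom_empty] at h'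
          simp at h'
      · have : (Mbab m).step (Sum.inr (Sum.inl i)) 1 = ∅ := by
          simp [Mbab, hi]
        rw [this, SNFA.evalFrom_empty] at h
        simp at h

theorem Mbab_accepts (m : ℕ) [NeZero m] : (Mbab m).accepts = Lbab m := by
  ext w
  constructor
  · rintro ⟨q, hq, hmem⟩
    have hq' : q = Sum.inr (Sum.inr ()) := hq
    subst hq'
    cases w with
    | nil => simp [SNFA.evalFrom_nil, SNFA.accepts, Mbab] at hmem
    | cons a w =>
      rw [SNFA.evalFrom_cons, SNFA.stepSet_singleton] at hmem
      rcases fin_two_cases a with rfl | rfl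
      · have : (Mbab m).step (Mbab m).start 0 = ∅ := by simp [Mbab]
        rw [this, SNFA.evalFrom_empty] at hmem
        simp at hmem
      · have : (Mbab m).step (Mbab m).start 1 = {Sum.inr (Sum.inl 0)} := by
          simp [Mbab]
        rw [this] at hmem
        obtain ⟨j, rfl, hj⟩ := Mbab_accept_reach m w 0 hmem
        rw [zero_add] at hj
        obtain ⟨k, rfl⟩ := (ZMod.natCast_eq_zero_iff j m).mp hj
        exact ⟨k, by rw [Nat.mul_comm]⟩
  · rintro ⟨k, rfl⟩
    refine ⟨Sum.inr (Sum.inr ()), rfl, ?_⟩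
    rw [SNFA.evalFrom_cons, SNFA.stepSet_singleton]
    have h1 : (Mbab m).step (Mbab m).start 1 = {Sum.inr (Sum.inl 0)} := by
      simp [Mbab]
    rw [h1, SNFA.evalFrom_append_s3, Mbab_eval_replicate]
    have hz : ((k * m : ℕ) : ZMod m) = 0 := by
      rw [ZMod.natCast_eq_zero_iff]
      exact ⟨k, Nat.mul_comm k m⟩
    rw [zero_add, hz]
    show Sum.inr (Sum.inr ()) ∈ (Mbab m).evalFrom _ [1]
    rw [show ([1] : List (Fin 2)) = [(1 : Fin 2)] from rfl, SNFA.evalFrom_cons,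
      SNFA.stepSet_singleton]
    have h2 : (Mbab m).step (Sum.inr (Sum.inl (0 : ZMod m))) 1
        = {Sum.inr (Sum.inr ())} := by simp [Mbab]
    rw [h2, SNFA.evalFrom_nil]
    rfl

/-! ### The fooling set for the lower bound -/

/-- Left parts of the fooling-set pairs. -/
def fx (m : ℕ) (i : ℕ) : List (Fin 2) :=
  if i < m then 1 :: List.replicate i 0
  else if i = m then []
  else 1 :: (List.replicate m 0 ++ [1])

/-- Right parts of the fooling-set pairs. -/
def fy (m : ℕ) (i : ℕ) : List (Fin 2) :=
  if i < m then List.replicate (m - i) 0 ++ [1]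
  else if i = m then [1, 1]
  else []

theorem fxy_mem (m : ℕ) (hm : 0 < m) (i : ℕ) : fx m i ++ fy m i ∈ Lbab m := by
  rcases lt_trichotomy i m with h | h | h
  · have : fx m i ++ fy m i = 1 :: (List.replicate m (0 : Fin 2) ++ [1]) := by
      simp only [fx, fy, if_pos h]
      rw [List.cons_append, ← List.append_assoc, ← List.replicate_add]
      congr 3
      omega
    rw [this]
    exact (mem_Lbab_iff m m hm).mpr ⟨1, (Nat.mul_one m).symm⟩
  · have : fx m i ++ fy m i = 1 :: (List.replicate 0 (0 : Fin 2) ++ [1]) := by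
      rw [h]; simp [fx, fy]
    rw [this]
    exact (mem_Lbab_iff m 0 hm).mpr ⟨0, rfl⟩
  · have h1 : ¬ i < m := by omega
    have h2 : i ≠ m := by omega
    have : fx m i ++ fy m i = 1 :: (List.replicate m (0 : Fin 2) ++ [1]) := by
      simp [fx, fy, h1, h2]
    rw [this]
    exact (mem_Lbab_iff m m hm).mpr ⟨1, (Nat.mul_one m).symm⟩

theorem fooling (m : ℕ) (hm : 0 < m) {i j : ℕ} (hi : i < m + 2) (hj : j < m + 2)
    (hij : i ≠ j) (h1 : fx m i ++ fy m j ∈ Lbab m) (h2 : fx m j ++ fy m i ∈ Lbab m) :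
    False := by
  -- helper facts about counts
  have hcount := @count_one_of_mem_Lbab m
  rcases lt_trichotomy i m with hi' | hi' | hi' <;>
    rcases lt_trichotomy j m with hj' | hj' | hj'
  · -- i < m, j < m, i ≠ j
    have e1 : fx m i ++ fy m j = 1 :: (List.replicate (i + (m - j)) (0 : Fin 2) ++ [1]) := by
      simp only [fx, fy, if_pos hi', if_pos hj']
      rw [List.cons_append, ← List.append_assoc, ← List.replicate_add]
    rw [e1, mem_Lbab_iff m _ hm] at h1
    have e2 : fx m j ++ fy m i = 1 :: (List.replicate (j + (m - i)) (0 : Fin 2) ++ [1]) := by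
      simp only [fx, fy, if_pos hi', if_pos hj']
      rw [List.cons_append, ← List.append_assoc, ← List.replicate_add]
    rw [e2, mem_Lbab_iff m _ hm] at h2
    obtain ⟨s, hs⟩ := h1
    -- i + (m - j) is in (0, 2m) and divisible by m, so it equals m, giving i = j
    have h5 : 0 < m * s := by omega
    have h6 : m * s < m * 2 := by omega
    have hs2 : s < 2 := Nat.lt_of_mul_lt_mul_left h6
    have hs0 : s ≠ 0 := by rintro rfl; simp at h5
    have hs1 : s = 1 := by omega
    rw [hs1, Nat.mul_one] at hs
    omega
  · -- i < m, j = m : fx m j ++ fy m i = replicate (m - i) 0 ++ [1], count 1 = 1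
    have e : fx m j ++ fy m i = List.replicate (m - i) (0 : Fin 2) ++ [1] := by
      rw [hj']; simp [fx, fy, hi']
    have hc := hcount h2
    rw [e] at hc
    simp [List.count_append, List.count_replicate] at hc
  · -- i < m, j > m : fx m i ++ fy m j = 1 :: replicate i 0, count 1 = 1
    have hj1 : ¬ j < m := by omega
    have hj2 : j ≠ m := by omega
    have : fx m i ++ fy m j = 1 :: List.replicate i (0 : Fin 2) := by
      simp [fx, fy, hi', hj1, hj2]
    have hc := hcount h1
    rw [this] at hc
    simp [List.count_cons, List.count_replicate] at hc
  · -- i = m, j < m : symmetric to case 2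
    have e : fx m i ++ fy m j = List.replicate (m - j) (0 : Fin 2) ++ [1] := by
      rw [hi']; simp [fx, fy, hj']
    have hc := hcount h1
    rw [e] at hc
    simp [List.count_append, List.count_replicate] at hc
  · omega
  · -- i = m, j > m : fx m i ++ fy m j = [], count = 0
    have hj1 : ¬ j < m := by omega
    have hj2 : j ≠ m := by omega
    have e : fx m i ++ fy m j = ([] : List (Fin 2)) := by
      rw [hi']; simp [fx, fy, hj1, hj2]
    have hc := hcount h1
    rw [e] at hc
    simp at hc
  · -- i > m, j < m : symmetric to case 3
    have hi1 : ¬ i < m := by omega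
    have hi2 : i ≠ m := by omega
    have : fx m j ++ fy m i = 1 :: List.replicate j (0 : Fin 2) := by
      simp [fx, fy, hj', hi1, hi2]
    have hc := hcount h2
    rw [this] at hc
    simp [List.count_cons, List.count_replicate] at hc
  · -- i > m, j = m
    have hi1 : ¬ i < m := by omega
    have hi2 : i ≠ m := by omega
    have e : fx m j ++ fy m i = ([] : List (Fin 2)) := by
      rw [hj']; simp [fx, fy, hi1, hi2]
    have hc := hcount h2
    rw [e] at hc
    simp at hc
  · omega

/-! ### Main theorem -/

/-- For `n ≥ 3`, the language `L₂ = b(a^{n-2})*b` (over the alphabet `{a, b}`,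
encoded as `a = 0`, `b = 1` in `Fin 2`) is suffix-free and its nondeterministic
state complexity is exactly `n`. -/
theorem nsc_b_a_pow_b (n : ℕ) (hn : 3 ≤ n) :
    SuffixFree {w : List (Fin 2) | ∃ k : ℕ, w = 1 :: (List.replicate (k * (n - 2)) 0 ++ [1])} ∧
    NSCeq {w : List (Fin 2) | ∃ k : ℕ, w = 1 :: (List.replicate (k * (n - 2)) 0 ++ [1])} n := by
  set m := n - 2 with hm
  have hm1 : 0 < m := by omega
  haveI : NeZero m := ⟨by omega⟩
  have hL : {w : List (Fin 2) | ∃ k : ℕ, w = 1 :: (List.replicate (k * (n - 2)) 0 ++ [1])}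
      = Lbab m := rfl
  rw [hL]
  refine ⟨?_, ?_, ?_⟩
  · -- Suffix-freeness
    rintro u v ⟨k, rfl⟩ ⟨l, rfl⟩ ⟨t, ht⟩
    have hlen := congrArg List.length ht
    simp at hlen
    rcases Nat.eq_zero_or_pos t.length with h0 | h0
    · rw [List.length_eq_zero_iff.mp h0, List.nil_append] at ht
      exact ht
    · exfalso
      -- element at index t.length of both sides
      have hkl : k * m < l * m := by omega
      obtain ⟨d, hd⟩ : ∃ d, t.length = d + 1 := ⟨t.length - 1, by omega⟩
      have e1 : (t ++ 1 :: (List.replicate (k * m) (0 : Fin 2) ++ [1]))[t.length]?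
          = some 1 := by
        rw [List.getElem?_append_right (Nat.le_refl t.length)]
        simp
      rw [ht, hd] at e1
      have hbound : d < l * m := by omega
      have e2 : ((1 : Fin 2) :: (List.replicate (l * m) (0 : Fin 2) ++ [1]))[d + 1]?
          = some 0 := by
        rw [List.getElem?_cons_succ, List.getElem?_append_left (by simpa using hbound)]
        simp [List.getElem?_replicate, hbound]
      rw [e1] at e2
      simp at e2
  · -- upper bound
    refine ⟨Unit ⊕ ZMod m ⊕ Unit, inferInstance, Mbab m, Mbab_accepts m, ?_⟩
    simp [ZMod.card]
    omega
  · -- lower bound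
    intro σ _ M hM
    have hmem : ∀ i : Fin (m + 2),
        ∃ p ∈ M.evalFrom {M.start} (fx m i), ∃ q ∈ M.accept, q ∈ M.evalFrom {p} (fy m i) := by
      intro i
      apply M.exists_split_of_mem_accepts
      rw [hM]
      exact fxy_mem m hm1 i
    choose f hf q hq hq' using hmem
    have hinj : Function.Injective f := by
      intro i j hfij
      by_contra hij
      have hij' : (i : ℕ) ≠ (j : ℕ) := fun h => hij (Fin.ext h)
      have h1 : fx m i ++ fy m j ∈ Lbab m := by
        rw [← hM]
        exact M.mem_accepts_of_split (hfij ▸ hf i) (hq j) (hfij ▸ hq' j)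
      have h2 : fx m j ++ fy m i ∈ Lbab m := by
        rw [← hM]
        exact M.mem_accepts_of_split (hfij ▸ hf j) (hq i) (hfij ▸ hq' i)
      exact fooling m hm1 i.isLt j.isLt hij' h1 h2
    calc n = Fintype.card (Fin (m + 2)) := by simp; omega
    _ ≤ Fintype.card σ := Fintype.card_le_of_injective f hinj
end

section
/- Intersection upper bound: let L₁ and L₂ be suffix-free regular languages over an alphabet Σ with NSC(L₁) = m and NSC(L₂) = n, where m, n ≥ 2. Then NSC(L₁ ∩ L₂) ≤ mn − (m + n) + 2, i.e., there is an NFA with at most mn − (m+n) + 2 states accepting L₁ ∩ L₂. -/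
open Computability

namespace SNFAaux

open SNFA

variable {α σ σ₁ σ₂ : Type}

theorem evalFrom_nil (M : SNFA α σ) (S : Set σ) : M.evalFrom S [] = S := rfl

theorem evalFrom_append (M : SNFA α σ) (S : Set σ) (u v : List α) :
    M.evalFrom S (u ++ v) = M.evalFrom (M.evalFrom S u) v :=
  List.foldl_append

theorem evalFrom_singleton (M : SNFA α σ) (S : Set σ) (a : α) :
    M.evalFrom S [a] = M.stepSet S a := rfl

theorem evalFrom_concat (M : SNFA α σ) (S : Set σ) (w : List α) (a : α) :
    M.evalFrom S (w ++ [a]) = M.stepSet (M.evalFrom S w) a := by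
  rw [evalFrom_append, evalFrom_singleton]

theorem stepSet_mono (M : SNFA α σ) {S T : Set σ} (h : S ⊆ T) (a : α) :
    M.stepSet S a ⊆ M.stepSet T a := by
  intro x hx
  simp only [SNFA.stepSet, Set.mem_iUnion] at hx ⊢
  obtain ⟨s, hs, hx⟩ := hx
  exact ⟨s, h hs, hx⟩

theorem evalFrom_mono (M : SNFA α σ) {S T : Set σ} (h : S ⊆ T) (w : List α) :
    M.evalFrom S w ⊆ M.evalFrom T w := by
  induction w generalizing S T with
  | nil => exact h
  | cons a w ih => exact ih (stepSet_mono M h a)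

theorem stepSet_singleton (M : SNFA α σ) (s : σ) (a : α) :
    M.stepSet {s} a = M.step s a := by
  simp [SNFA.stepSet]

/-- nonempty from NSCge 2 -/
theorem nonempty_of_ge2 {L : Language α} (h : NSCge L 2) : ∃ x, x ∈ L := by
  by_contra hc
  push_neg at hc
  have hL : (SNFA.accepts ⟨fun _ _ => (∅ : Set Unit), (), ∅⟩ : Language α) = L := by
    ext w
    simp only [SNFA.accepts, Set.mem_setOf_eq, Set.mem_empty_iff_false]
    constructor
    · rintro ⟨q, hq, -⟩; exact hq.elim
    · intro hw; exact absurd hw (hc w)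
  have := h Unit _ hL
  simp at this

/-- key: the start state does not recur, for suffix-free nonempty languages -/
theorem start_not_mem_evalFrom (M : SNFA α σ)
    (hsf : SuffixFree M.accepts) (hne : ∃ x, x ∈ M.accepts)
    {w : List α} (hw : w ≠ []) : M.start ∉ M.evalFrom {M.start} w := by
  intro hmem
  obtain ⟨x, hx⟩ := hne
  have hwx : w ++ x ∈ M.accepts := by
    obtain ⟨q, hq, hqe⟩ := hx
    refine ⟨q, hq, ?_⟩
    rw [evalFrom_append]
    exact evalFrom_mono M (Set.singleton_subset_iff.2 hmem) x hqe
  have heq := hsf x (w ++ x) hx hwx ⟨w, rfl⟩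
  have : x.length = w.length + x.length := by
    conv_lhs => rw [heq]
    simp
  exact hw (List.length_eq_zero_iff.mp (by omega))

/-- prune transitions into the start state -/
def prune (M : SNFA α σ) : SNFA α σ :=
  ⟨fun q a => M.step q a \ {M.start}, M.start, M.accept⟩

theorem prune_stepSet (M : SNFA α σ) (S : Set σ) (a : α) :
    (prune M).stepSet S a = M.stepSet S a \ {M.start} := by
  ext x
  simp only [SNFA.stepSet, prune, Set.mem_iUnion, Set.mem_diff, Set.mem_singleton_iff]
  tauto

theorem prune_step_not_start (M : SNFA α σ) (q : σ) (a : α) :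
    M.start ∉ (prune M).step q a := by
  simp [prune]

theorem prune_evalFrom (M : SNFA α σ)
    (H : ∀ w : List α, w ≠ [] → M.start ∉ M.evalFrom {M.start} w)
    (w : List α) : (prune M).evalFrom {M.start} w = M.evalFrom {M.start} w := by
  induction w using List.reverseRecOn with
  | nil => rfl
  | append_singleton w a ih =>
      rw [evalFrom_concat, evalFrom_concat, ih, prune_stepSet]
      rw [← evalFrom_concat]
      exact Set.diff_singleton_eq_self (H (w ++ [a]) (by simp))

theorem prune_accepts (M : SNFA α σ)
    (H : ∀ w : List α, w ≠ [] → M.start ∉ M.evalFrom {M.start} w) :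
    (prune M).accepts = M.accepts := by
  ext w
  show (∃ q ∈ (prune M).accept, q ∈ (prune M).evalFrom {(prune M).start} w)
    ↔ (∃ q ∈ M.accept, q ∈ M.evalFrom {M.start} w)
  rw [show (prune M).start = M.start from rfl, prune_evalFrom M H]
  exact Iff.rfl

section Product

variable (M₁ : SNFA α σ₁) (M₂ : SNFA α σ₂)

/-- pairs embedded in the option type -/
def pairSet (A : Set σ₁) (B : Set σ₂) :
    Set (Option ({q : σ₁ // q ≠ M₁.start} × {q : σ₂ // q ≠ M₂.start})) :=
  {y | ∃ p q, y = some (p, q) ∧ p.1 ∈ A ∧ q.1 ∈ B}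

/-- product automaton with merged start states -/
def sprod : SNFA α (Option ({q : σ₁ // q ≠ M₁.start} × {q : σ₂ // q ≠ M₂.start})) where
  start := none
  step x a :=
    match x with
    | none => pairSet M₁ M₂ (M₁.step M₁.start a) (M₂.step M₂.start a)
    | some (p, q) => pairSet M₁ M₂ (M₁.step p.1 a) (M₂.step q.1 a)
  accept := {y | match y with
    | none => M₁.start ∈ M₁.accept ∧ M₂.start ∈ M₂.accept
    | some (p, q) => p.1 ∈ M₁.accept ∧ q.1 ∈ M₂.accept}

theorem sprod_stepSet_pairSet {A : Set σ₁} {B : Set σ₂}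
    (hA : M₁.start ∉ A) (hB : M₂.start ∉ B) (a : α) :
    (sprod M₁ M₂).stepSet (pairSet M₁ M₂ A B) a
      = pairSet M₁ M₂ (M₁.stepSet A a) (M₂.stepSet B a) := by
  ext y
  simp only [SNFA.stepSet, Set.mem_iUnion, pairSet, Set.mem_setOf_eq]
  constructor
  · rintro ⟨s, ⟨p, q, rfl, hp, hq⟩, hy⟩
    obtain ⟨p', q', rfl, hp', hq'⟩ := hy
    refine ⟨p', q', rfl, ?_, ?_⟩
    · exact ⟨p.1, hp, hp'⟩
    · exact ⟨q.1, hq, hq'⟩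
  · rintro ⟨p', q', rfl, hp', hq'⟩
    obtain ⟨p₀, hp₀, hp'⟩ := hp'
    obtain ⟨q₀, hq₀, hq'⟩ := hq'
    have hpne : p₀ ≠ M₁.start := fun h => hA (h ▸ hp₀)
    have hqne : q₀ ≠ M₂.start := fun h => hB (h ▸ hq₀)
    exact ⟨some (⟨p₀, hpne⟩, ⟨q₀, hqne⟩), ⟨⟨p₀, hpne⟩, ⟨q₀, hqne⟩, rfl, hp₀, hq₀⟩,
      ⟨p', q', rfl, hp', hq'⟩⟩

theorem sprod_evalFrom
    (H₁ : ∀ q a, M₁.start ∉ M₁.step q a) (H₂ : ∀ q a, M₂.start ∉ M₂.step q a)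
    (w : List α) (hw : w ≠ []) :
    (sprod M₁ M₂).evalFrom {(sprod M₁ M₂).start} w
      = pairSet M₁ M₂ (M₁.evalFrom {M₁.start} w) (M₂.evalFrom {M₂.start} w) := by
  have hs₁ : ∀ (S : Set σ₁) a, M₁.start ∉ M₁.stepSet S a := by
    intro S a h
    simp only [SNFA.stepSet, Set.mem_iUnion] at h
    obtain ⟨s, _, h⟩ := h
    exact H₁ s a h
  have hs₂ : ∀ (S : Set σ₂) a, M₂.start ∉ M₂.stepSet S a := by
    intro S a h
    simp only [SNFA.stepSet, Set.mem_iUnion] at h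
    obtain ⟨s, _, h⟩ := h
    exact H₂ s a h
  have hne₁ : ∀ (v : List α), v ≠ [] → M₁.start ∉ M₁.evalFrom {M₁.start} v := by
    intro v hv
    obtain ⟨u, a, rfl⟩ := (List.eq_nil_or_concat v).resolve_left hv
    rw [List.concat_eq_append, evalFrom_concat]; exact hs₁ _ _
  have hne₂ : ∀ (v : List α), v ≠ [] → M₂.start ∉ M₂.evalFrom {M₂.start} v := by
    intro v hv
    obtain ⟨u, a, rfl⟩ := (List.eq_nil_or_concat v).resolve_left hv
    rw [List.concat_eq_append, evalFrom_concat]; exact hs₂ _ _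
  induction w using List.reverseRecOn with
  | nil => exact absurd rfl hw
  | append_singleton w a ih =>
      rcases eq_or_ne w [] with rfl | hwne
      · simp only [List.nil_append]
        rw [evalFrom_singleton, evalFrom_singleton, evalFrom_singleton,
          stepSet_singleton, stepSet_singleton, stepSet_singleton]
        rfl
      · rw [evalFrom_concat, evalFrom_concat, evalFrom_concat, ih hwne,
          sprod_stepSet_pairSet M₁ M₂ (hne₁ w hwne) (hne₂ w hwne)]

theorem sprod_accepts
    (H₁ : ∀ q a, M₁.start ∉ M₁.step q a) (H₂ : ∀ q a, M₂.start ∉ M₂.step q a) :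
    (sprod M₁ M₂).accepts = M₁.accepts ⊓ M₂.accepts := by
  ext w
  rcases eq_or_ne w [] with rfl | hw
  · show (∃ q ∈ (sprod M₁ M₂).accept, q ∈ (sprod M₁ M₂).evalFrom {(sprod M₁ M₂).start} [])
      ↔ (∃ q ∈ M₁.accept, q ∈ M₁.evalFrom {M₁.start} []) ∧
        (∃ q ∈ M₂.accept, q ∈ M₂.evalFrom {M₂.start} [])
    simp only [evalFrom_nil, Set.mem_singleton_iff]
    constructor
    · rintro ⟨q, hq, rfl⟩
      exact ⟨⟨M₁.start, hq.1, rfl⟩, ⟨M₂.start, hq.2, rfl⟩⟩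
    · rintro ⟨⟨q₁, hq₁, rfl⟩, ⟨q₂, hq₂, rfl⟩⟩
      exact ⟨none, ⟨hq₁, hq₂⟩, rfl⟩
  · show (∃ q ∈ (sprod M₁ M₂).accept, q ∈ (sprod M₁ M₂).evalFrom {(sprod M₁ M₂).start} w)
      ↔ (∃ q ∈ M₁.accept, q ∈ M₁.evalFrom {M₁.start} w) ∧
        (∃ q ∈ M₂.accept, q ∈ M₂.evalFrom {M₂.start} w)
    rw [sprod_evalFrom M₁ M₂ H₁ H₂ w hw]
    constructor
    · rintro ⟨y, hacc, p, q, rfl, hp, hq⟩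
      exact ⟨⟨p.1, hacc.1, hp⟩, ⟨q.1, hacc.2, hq⟩⟩
    · rintro ⟨⟨q₁, hq₁a, hq₁e⟩, ⟨q₂, hq₂a, hq₂e⟩⟩
      have hne₁ : q₁ ≠ M₁.start := by
        rintro rfl
        obtain ⟨u, a, rfl⟩ := (List.eq_nil_or_concat w).resolve_left hw
        rw [List.concat_eq_append, evalFrom_concat] at hq₁e
        simp only [SNFA.stepSet, Set.mem_iUnion] at hq₁e
        obtain ⟨s, _, h⟩ := hq₁e
        exact H₁ s a h
      have hne₂ : q₂ ≠ M₂.start := by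
        rintro rfl
        obtain ⟨u, a, rfl⟩ := (List.eq_nil_or_concat w).resolve_left hw
        rw [List.concat_eq_append, evalFrom_concat] at hq₂e
        simp only [SNFA.stepSet, Set.mem_iUnion] at hq₂e
        obtain ⟨s, _, h⟩ := hq₂e
        exact H₂ s a h
      exact ⟨some (⟨q₁, hne₁⟩, ⟨q₂, hne₂⟩), ⟨hq₁a, hq₂a⟩,
        ⟨⟨q₁, hne₁⟩, ⟨q₂, hne₂⟩, rfl, hq₁e, hq₂e⟩⟩

end Product

end SNFAaux

/-- **Intersection, upper bound.** If `L₁` and `L₂` are suffix-free regular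
languages with nondeterministic state complexities `m, n ≥ 2`, then some NFA
with at most `m * n - (m + n) + 2` states accepts `L₁ ∩ L₂`. -/
theorem intersection_upper {α : Type} (L₁ L₂ : Language α) (m n : ℕ)
    (hsf₁ : SuffixFree L₁) (hsf₂ : SuffixFree L₂)
    (hm : NSCeq L₁ m) (hn : NSCeq L₂ n) (hm2 : 2 ≤ m) (hn2 : 2 ≤ n) :
    NSCle (L₁ ⊓ L₂) (m * n - (m + n) + 2) := by
  classical
  obtain ⟨⟨σ₁, x₁, M₁, hM₁, hc₁⟩, hg₁⟩ := hm
  obtain ⟨⟨σ₂, x₂, M₂, hM₂, hc₂⟩, hg₂⟩ := hn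
  have hne₁ : ∃ x, x ∈ L₁ := SNFAaux.nonempty_of_ge2
    (fun σ _ M h => le_trans hm2 (hg₁ σ M h))
  have hne₂ : ∃ x, x ∈ L₂ := SNFAaux.nonempty_of_ge2
    (fun σ _ M h => le_trans hn2 (hg₂ σ M h))
  have H₁ : ∀ w : List α, w ≠ [] → M₁.start ∉ M₁.evalFrom {M₁.start} w :=
    fun w hw => SNFAaux.start_not_mem_evalFrom M₁ (hM₁ ▸ hsf₁) (hM₁ ▸ hne₁) hw
  have H₂ : ∀ w : List α, w ≠ [] → M₂.start ∉ M₂.evalFrom {M₂.start} w :=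
    fun w hw => SNFAaux.start_not_mem_evalFrom M₂ (hM₂ ▸ hsf₂) (hM₂ ▸ hne₂) hw
  set N₁ := SNFAaux.prune M₁ with hN₁
  set N₂ := SNFAaux.prune M₂ with hN₂
  have hNa₁ : N₁.accepts = L₁ := by rw [hN₁, SNFAaux.prune_accepts M₁ H₁, hM₁]
  have hNa₂ : N₂.accepts = L₂ := by rw [hN₂, SNFAaux.prune_accepts M₂ H₂, hM₂]
  have hH₁ : ∀ q a, N₁.start ∉ N₁.step q a := fun q a => SNFAaux.prune_step_not_start M₁ q a
  have hH₂ : ∀ q a, N₂.start ∉ N₂.step q a := fun q a => SNFAaux.prune_step_not_start M₂ q a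
  refine ⟨Option ({q : σ₁ // q ≠ N₁.start} × {q : σ₂ // q ≠ N₂.start}), inferInstance,
    SNFAaux.sprod N₁ N₂, ?_, ?_⟩
  · rw [SNFAaux.sprod_accepts N₁ N₂ hH₁ hH₂, hNa₁, hNa₂]
  · have hcard : Fintype.card (Option ({q : σ₁ // q ≠ N₁.start} × {q : σ₂ // q ≠ N₂.start}))
        = (Fintype.card σ₁ - 1) * (Fintype.card σ₂ - 1) + 1 := by
      rw [Fintype.card_option, Fintype.card_prod]
      congr 1
      · congr 1
        · rw [Fintype.card_subtype_compl, Fintype.card_subtype_eq]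
        · rw [Fintype.card_subtype_compl, Fintype.card_subtype_eq]
    rw [hcard]
    obtain ⟨a, rfl⟩ := Nat.exists_eq_add_of_le hm2
    obtain ⟨b, rfl⟩ := Nat.exists_eq_add_of_le hn2
    have h1 : (Fintype.card σ₁ - 1) * (Fintype.card σ₂ - 1) ≤ (1 + a) * (1 + b) :=
      Nat.mul_le_mul (by omega) (by omega)
    have h2 : (1 + a) * (1 + b) = 1 + a + b + a * b := by ring
    have h3 : (2 + a) * (2 + b) = 4 + 2 * a + 2 * b + a * b := by ring
    omega
end

section
/- Reversal upper bound: let L be a regular language over an alphabet Σ with NSC(L) = m. Then NSC(L^R) ≤ m + 1, i.e., there is an NFA with at most m + 1 states accepting the reversal L^R = { w^R : w ∈ L }. -/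
open Computability

/-- The reversal of a language: `L^R = { w^R : w ∈ L }`. -/
def revLang {α : Type} (L : Language α) : Language α :=
  {w | w.reverse ∈ L}

namespace SNFA

variable {α σ : Type}

lemma mem_evalFrom_iff (M : SNFA α σ) (S : Set σ) (w : List α) (p : σ) :
    p ∈ M.evalFrom S w ↔ ∃ q ∈ S, p ∈ M.evalFrom {q} w := by
  induction w generalizing S with
  | nil => simp [evalFrom]
  | cons a w ih =>
    show p ∈ M.evalFrom (M.stepSet S a) w ↔ _
    rw [ih]
    constructor
    · rintro ⟨r, hr, hp⟩
      simp only [stepSet, Set.mem_iUnion] at hr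
      obtain ⟨q, hq, hr⟩ := hr
      refine ⟨q, hq, ?_⟩
      show p ∈ M.evalFrom (M.stepSet {q} a) w
      rw [ih]
      exact ⟨r, by simp [stepSet, hr], hp⟩
    · rintro ⟨q, hq, hp⟩
      have hp' : p ∈ M.evalFrom (M.stepSet {q} a) w := hp
      rw [ih] at hp'
      obtain ⟨r, hr, hp'⟩ := hp'
      simp only [stepSet, Set.mem_iUnion, Set.mem_singleton_iff] at hr
      obtain ⟨q', hq', hr⟩ := hr
      subst hq'
      exact ⟨r, Set.mem_biUnion hq hr, hp'⟩

lemma evalFrom_append_singleton (M : SNFA α σ) (S : Set σ) (w : List α) (a : α) :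
    M.evalFrom S (w ++ [a]) = M.stepSet (M.evalFrom S w) a := by
  simp [evalFrom, List.foldl_append]

/-- The reversal automaton: reverse all transitions, add a fresh start state
`none` that mimics (post-one-step) all the accepting states, and accept at the
old start state (and at `none` iff the empty word was accepted). -/
def revNFA (M : SNFA α σ) : SNFA α (Option σ) where
  step q a :=
    match q with
    | none => {p | ∃ t, p = some t ∧ ∃ r ∈ M.accept, r ∈ M.step t a}
    | some s => {p | ∃ t, p = some t ∧ s ∈ M.step t a}
  start := none
  accept := {p | p = some M.start ∨ (p = none ∧ M.start ∈ M.accept)}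

lemma revNFA_some_iff (M : SNFA α σ) (u : List α) (p t : σ) :
    (some p ∈ (revNFA M).evalFrom {some t} u ↔ t ∈ M.evalFrom {p} u.reverse)
    ∧ none ∉ (revNFA M).evalFrom {some t} u := by
  induction u generalizing t with
  | nil => simp [evalFrom, eq_comm]
  | cons a u ih =>
    have hstep : (revNFA M).stepSet {some t} a
        = {p | ∃ s, p = some s ∧ t ∈ M.step s a} := by
      simp [stepSet, revNFA]
    constructor
    · show some p ∈ (revNFA M).evalFrom ((revNFA M).stepSet {some t} a) u ↔ _
      rw [hstep, mem_evalFrom_iff]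
      rw [List.reverse_cons, evalFrom_append_singleton]
      simp only [stepSet, Set.mem_iUnion]
      constructor
      · rintro ⟨q, ⟨s, rfl, hs⟩, hq⟩
        exact ⟨s, (ih s).1.mp hq, hs⟩
      · rintro ⟨s, hs, hstep'⟩
        exact ⟨some s, ⟨s, rfl, hstep'⟩, (ih s).1.mpr hs⟩
    · show none ∉ (revNFA M).evalFrom ((revNFA M).stepSet {some t} a) u
      rw [hstep]
      intro h
      rw [mem_evalFrom_iff] at h
      obtain ⟨q, ⟨s, rfl, _⟩, hq⟩ := h
      exact (ih s).2 hq

lemma revNFA_accepts (M : SNFA α σ) :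
    (revNFA M).accepts = revLang M.accepts := by
  ext w
  cases w with
  | nil =>
    simp only [accepts, revLang, Set.mem_setOf_eq]
    constructor
    · rintro ⟨q, hq, hq'⟩
      simp only [evalFrom, List.foldl_nil, Set.mem_singleton_iff] at hq'
      subst hq'
      rcases hq with hq | ⟨_, hq⟩
      · exact absurd hq (by simp [revNFA])
      · exact ⟨M.start, hq, by simp [evalFrom]⟩
    · rintro ⟨q, hq, hq'⟩
      simp only [evalFrom, List.foldl_nil, Set.mem_singleton_iff] at hq'
      subst hq'
      exact ⟨none, Or.inr ⟨rfl, hq⟩, by simp [evalFrom, revNFA]⟩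
  | cons a u =>
    simp only [accepts, revLang, Set.mem_setOf_eq]
    have hstart : (revNFA M).start = none := rfl
    have hstep0 : (revNFA M).stepSet {(revNFA M).start} a
        = {p | ∃ s, p = some s ∧ ∃ r ∈ M.accept, r ∈ M.step s a} := by
      simp [stepSet, revNFA]
    constructor
    · rintro ⟨q, hq, hq'⟩
      have hq'' : q ∈ (revNFA M).evalFrom ((revNFA M).stepSet {(revNFA M).start} a) u := hq'
      rw [hstep0, mem_evalFrom_iff] at hq''
      obtain ⟨x, ⟨s, rfl, r, hr, hrs⟩, hx⟩ := hq''
      rcases hq with hq | ⟨hq, _⟩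
      · rw [hq] at hx
        have hs : s ∈ M.evalFrom {M.start} u.reverse := (revNFA_some_iff M u M.start s).1.mp hx
        refine ⟨r, hr, ?_⟩
        rw [List.reverse_cons, evalFrom_append_singleton]
        simp only [stepSet, Set.mem_iUnion]
        exact ⟨s, hs, hrs⟩
      · rw [hq] at hx
        exact absurd hx (revNFA_some_iff M u M.start s).2
    · rintro ⟨r, hr, hr'⟩
      rw [List.reverse_cons, evalFrom_append_singleton] at hr'
      simp only [stepSet, Set.mem_iUnion] at hr'
      obtain ⟨s, hs, hrs⟩ := hr'
      refine ⟨some M.start, Or.inl rfl, ?_⟩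
      show some M.start ∈ (revNFA M).evalFrom ((revNFA M).stepSet {(revNFA M).start} a) u
      rw [hstep0, mem_evalFrom_iff]
      exact ⟨some s, ⟨s, rfl, r, hr, hrs⟩, (revNFA_some_iff M u M.start s).1.mpr hs⟩

end SNFA

/-- **Reversal, upper bound.** If `L` is a regular language with
nondeterministic state complexity `m`, then some NFA with at most `m + 1`
states accepts the reversal `L^R`. -/
theorem reversal_upper {α : Type} (L : Language α) (m : ℕ) (hm : NSCeq L m) :
    NSCle (revLang L) (m + 1) := by
  obtain ⟨⟨σ, x, M, hM, hcard⟩, _⟩ := hm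
  refine ⟨Option σ, @instFintypeOption σ x, M.revNFA, ?_, ?_⟩
  · rw [SNFA.revNFA_accepts, hM]
  · simpa [@Fintype.card_option σ x] using hcard
end
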